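/- Let v_l, v_r, t ∈ ℝ³ lie on a common affine line L (all with last coordinate 1), and suppose t does not lie in the convex cone generated by v_l and v_r. Then for all nonzero w₁, w₂ in the cone generated by v_l and v_r, (t × w₁)ᵀ (t × w₂) > 0. -/

import Mathlib

open Matrix

/-- The convex cone generated by two vectors. -/
def cone (v₁ v₂ : Fin 3 → ℝ) : Set (Fin 3 → ℝ) :=
  {x | ∃ l₁ l₂ : ℝ, 0 ≤ l₁ ∧ 0 ≤ l₂ ∧ x = l₁ • v₁ + l₂ • v₂}

theorem cross_quad_product_pos (vl vr t : Fin 3 → ℝ)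
    (hvl : vl 2 = 1) (hvr : vr 2 = 1) (ht : t 2 = 1)
    (hcol : Collinear ℝ ({vl, vr, t} : Set (Fin 3 → ℝ)))
    (htc : t ∉ cone vl vr) :
    ∀ w₁ ∈ cone vl vr, ∀ w₂ ∈ cone vl vr, w₁ ≠ 0 → w₂ ≠ 0 →
      0 < crossProduct t w₁ ⬝ᵥ crossProduct t w₂ := by
  have hmem : vl ∈ ({vl, vr, t} : Set (Fin 3 → ℝ)) := by simp
  obtain ⟨v, hv⟩ := (collinear_iff_of_mem hmem).mp hcol
  obtain ⟨s, hs⟩ := hv vr (by simp)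
  obtain ⟨u, hu⟩ := hv t (by simp)
  -- u ≠ 0
  have hune : u ≠ 0 := by
    intro h
    apply htc
    refine ⟨1, 0, zero_le_one, le_refl 0, ?_⟩
    rw [hu, h]
    funext i; simp
  -- v 2 = 0
  have hv2 : v 2 = 0 := by
    have := congrFun hu 2
    simp [ht, hvl, Pi.add_apply, Pi.smul_apply, smul_eq_mul] at this
    rcases this with h | h
    · exact absurd h hune
    · exact h
  -- u * (u - s) > 0
  have hus : 0 < u * (u - s) := by
    by_contra h
    push_neg at h
    apply htc
    have hsne : s ≠ 0 := by
      intro h0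
      rw [h0, sub_zero] at h
      exact absurd h (not_le.mpr (mul_self_pos.mpr hune))
    refine ⟨1 - u / s, u / s, ?_, ?_, ?_⟩
    · rcases hune.lt_or_gt with hu0 | hu0
      · have hsu : s ≤ u := by nlinarith
        have hs0 : s < 0 := lt_of_le_of_lt hsu hu0
        rw [sub_nonneg]
        rw [div_le_one_of_neg hs0]
        exact hsu
      · have hsu : u ≤ s := by nlinarith
        have hs0 : 0 < s := lt_of_lt_of_le hu0 hsu
        rw [sub_nonneg, div_le_one hs0]
        exact hsu
    · rcases hune.lt_or_gt with hu0 | hu0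
      · have hsu : s ≤ u := by nlinarith
        have hs0 : s < 0 := lt_of_le_of_lt hsu hu0
        exact le_of_lt (div_pos_of_neg_of_neg hu0 hs0)
      · have hsu : u ≤ s := by nlinarith
        have hs0 : 0 < s := lt_of_lt_of_le hu0 hsu
        exact le_of_lt (div_pos hu0 hs0)
    · rw [hu, hs]
      funext i
      simp only [vadd_eq_add, Pi.add_apply, Pi.smul_apply, smul_eq_mul]
      field_simp
      ring
  -- v ≠ 0 componentwise: not both v 0 = 0 and v 1 = 0
  have hv01 : v 0 ≠ 0 ∨ v 1 ≠ 0 := by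
    by_contra h
    push_neg at h
    apply htc
    refine ⟨1, 0, zero_le_one, le_refl 0, ?_⟩
    rw [hu]
    funext i
    fin_cases i <;> simp [h.1, h.2, hv2]
  -- key identity
  have key : ∀ a b : ℝ, crossProduct t (a • vl + b • vr)
      = (a * u + b * (u - s)) • (crossProduct v vl) := by
    intro a b
    rw [hu, hs]
    funext i
    fin_cases i <;>
      simp [cross_apply, vadd_eq_add, Pi.add_apply, Pi.smul_apply,
        smul_eq_mul] <;> ring
  -- positivity of (v ×₃ vl) ⬝ᵥ (v ×₃ vl)
  have hcc : 0 < crossProduct v vl ⬝ᵥ crossProduct v vl := by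
    have : crossProduct v vl ⬝ᵥ crossProduct v vl
        = (v 1 * vl 2 - v 2 * vl 1)^2 + (v 2 * vl 0 - v 0 * vl 2)^2
          + (v 0 * vl 1 - v 1 * vl 0)^2 := by
      simp only [cross_apply, dotProduct, Fin.sum_univ_three,
        Matrix.cons_val_zero, Matrix.cons_val_one, Matrix.head_cons,
        Matrix.cons_val_two, Matrix.tail_cons]
      ring
    rw [this, hvl, hv2]
    rcases hv01 with h | h <;>
      nlinarith [sq_nonneg (v 0 * vl 1 - v 1 * vl 0), mul_self_pos.mpr h,
        sq_nonneg (v 0), sq_nonneg (v 1)]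
  rintro w₁ ⟨a₁, b₁, ha₁, hb₁, rfl⟩ w₂ ⟨a₂, b₂, ha₂, hb₂, rfl⟩ hw₁ hw₂
  have hab₁ : a₁ ≠ 0 ∨ b₁ ≠ 0 := by
    by_contra h; push_neg at h; apply hw₁; rw [h.1, h.2]; funext i; simp
  have hab₂ : a₂ ≠ 0 ∨ b₂ ≠ 0 := by
    by_contra h; push_neg at h; apply hw₂; rw [h.1, h.2]; funext i; simp
  rw [key a₁ b₁, key a₂ b₂, smul_dotProduct, dotProduct_smul, smul_eq_mul,
    smul_eq_mul]
  have hα : ∀ a b : ℝ, 0 ≤ a → 0 ≤ b → (a ≠ 0 ∨ b ≠ 0) →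
      0 < (a * u + b * (u - s)) * u := by
    intro a b ha hb hab
    have h2 : 0 ≤ a * (u * u) := mul_nonneg ha (mul_self_nonneg u)
    have h3 : 0 ≤ b * (u * (u - s)) := mul_nonneg hb hus.le
    rcases hab with h | h
    · have : 0 < a * (u * u) :=
        mul_pos (ha.lt_of_ne (Ne.symm h)) (mul_self_pos.mpr hune)
      nlinarith
    · have : 0 < b * (u * (u - s)) := mul_pos (hb.lt_of_ne (Ne.symm h)) hus
      nlinarith
  have h1 := hα a₁ b₁ ha₁ hb₁ hab₁
  have h2 := hα a₂ b₂ ha₂ hb₂ hab₂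
  have hprod : 0 < (a₁ * u + b₁ * (u - s)) * (a₂ * u + b₂ * (u - s)) := by
    nlinarith [mul_pos h1 h2, mul_self_pos.mpr hune]
  rw [← mul_assoc]
  exact mul_pos hprod hcc
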